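/- Let x = c·x′ and y = c′·y′ be nonempty strings such that ssp_{x′} = ssp_{y′} (so in particular |x| = |y|). Then: (a) ssp_x = ssp_y if and only if π(x) = π(y); and (b) ssp_x ≺ ssp_y if and only if π(x) < π(y), where ∞ is greater than every natural number. -/

import Mathlib

open scoped ENat

variable {α : Type*}

/-- `w` is a palindrome. -/
def IsPal (w : List α) : Prop := w.reverse = w

/-- The substring `w[i..j]`, 1-indexed, inclusive; empty if `i > j`. -/
def sub (w : List α) (i j : ℕ) : List α := (w.take j).drop (i - 1)

/-- Two strings of the same length pal-match: they agree on which substrings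
`w[i..j]` (for `1 ≤ i < j ≤ |w|`) are palindromes. -/
def PalMatch (x y : List α) : Prop :=
  x.length = y.length ∧
    ∀ i j, 1 ≤ i → i < j → j ≤ x.length → (IsPal (sub x i j) ↔ IsPal (sub y i j))

/-- `sspAt w i` : length of the shortest palindromic suffix of `w[1..i]`
of length at least 2, or `∞` if none exists. -/
noncomputable def sspAt (w : List α) (i : ℕ) : ℕ∞ :=
  sInf {ℓ : ℕ∞ | ∃ u : List α, u <:+ w.take i ∧ IsPal u ∧ 2 ≤ u.length ∧ (u.length : ℕ∞) = ℓ}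

/-- The ssp-encoding of `w` as a sequence of length `|w|` over `ℕ ∪ {∞}`. -/
noncomputable def ssp (w : List α) : List ℕ∞ :=
  (List.range w.length).map fun k => sspAt w (k + 1)

/-- The palindromic proper suffixes of `w` (including the empty suffix). -/
def palSufs (w : List α) : Set (List α) :=
  {u | u <:+ w ∧ IsPal u ∧ u.length < w.length}

/-- The suffix-pal-groups of `w`, identified with the character `w[|w|-|u|]`
immediately to the left of their members. -/
def palSufGroups (w : List α) : Set (Option α) :=
  {c | ∃ u ∈ palSufs w, w[w.length - u.length - 1]? = c}

/-- Length of the representative (shortest member) of the suffix-pal-group of `w`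
whose members have the character `c` immediately to their left. -/
noncomputable def repLen (w : List α) (c : Option α) : ℕ :=
  sInf {ℓ : ℕ | ∃ u ∈ palSufs w, w[w.length - u.length - 1]? = c ∧ u.length = ℓ}

/-- The 1-based identifier of the suffix-pal-group of `w` with left character `c`:
identifiers are assigned in increasing order of the representatives' lengths. -/
noncomputable def groupIdOf (w : List α) (c : Option α) : ℕ :=
  Set.ncard {c' | c' ∈ palSufGroups w ∧ repLen w c' ≤ repLen w c}

/-- `sspgAt w i` : `∞` if `sspAt w i = ∞`, and otherwise the identifier of the
suffix-pal-group of `w[1..i-1]` containing the palindromic suffix of `w[1..i-1]`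
of length `sspAt w i - 2`. -/
noncomputable def sspgAt (w : List α) (i : ℕ) : ℕ∞ :=
  if sspAt w i = ⊤ then ⊤
  else (groupIdOf (w.take (i - 1))
        ((w.take (i - 1))[(i - 1) - ((sspAt w i).toNat - 2) - 1]?) : ℕ∞)

/-- `π(w) = sspg_{reverse w}[|w|]`. -/
noncomputable def piEnc (w : List α) : ℕ∞ := sspgAt w.reverse w.length

namespace Stmt8
open List

variable {α : Type*}

theorem pal_nil : IsPal ([] : List α) := rfl
theorem pal_singleton (a : α) : IsPal [a] := rfl

theorem pal_wrap {a b : α} {u : List α} : IsPal (a :: (u ++ [b])) ↔ a = b ∧ IsPal u := by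
  unfold IsPal
  constructor
  · intro h
    have h' : b :: (u.reverse ++ [a]) = a :: (u ++ [b]) := by simpa using h
    obtain ⟨h1, h2⟩ := List.cons_eq_cons.1 h'
    subst h1
    rw [List.append_left_inj] at h2
    exact ⟨rfl, h2⟩
  · rintro ⟨rfl, hu⟩
    simp [hu]

theorem suffix_eq_of_length {u₁ u₂ l : List α} (h1 : u₁ <:+ l) (h2 : u₂ <:+ l)
    (h : u₁.length = u₂.length) : u₁ = u₂ := by
  obtain ⟨z1, rfl⟩ := h1
  obtain ⟨z2, he⟩ := h2
  have hl : z1.length = z2.length := by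
    have := congrArg List.length he
    simp at this; omega
  exact (List.append_inj he.symm hl).2

/-- `PP w m t` : the prefix `w[1..m]` has a palindromic suffix of length `t`. -/
def PP (w : List α) (m t : ℕ) : Prop := ∃ u, u <:+ w.take m ∧ IsPal u ∧ u.length = t

theorem PP_zero (w : List α) (m : ℕ) : PP w m 0 := ⟨[], List.nil_suffix, pal_nil, rfl⟩

theorem PP_le {w : List α} {m t : ℕ} (h : PP w m t) : t ≤ m ∧ t ≤ w.length := by
  obtain ⟨u, hu, -, rfl⟩ := h
  have := hu.length_le
  simp at this
  omega

theorem PP_one {w : List α} {m : ℕ} (h1 : 1 ≤ m) (h2 : 1 ≤ w.length) : PP w m 1 := by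
  have hne : w.take m ≠ [] := by
    rw [← List.length_pos_iff_ne_nil]
    simp; omega
  obtain he | ⟨L, b, he⟩ := List.eq_nil_or_concat (w.take m)
  · exact absurd he hne
  · exact ⟨[b], ⟨L, by rw [he, List.concat_eq_append]⟩, pal_singleton b, rfl⟩

/-- palindromic suffix of given length is the canonical one -/
theorem PP_iff_drop {w : List α} {m t : ℕ} (ht : t ≤ m) (hm : m ≤ w.length) :
    PP w m t ↔ IsPal ((w.take m).drop (m - t)) := by
  constructor
  · rintro ⟨u, hu, hp, rfl⟩
    have : (w.take m).drop (m - u.length) = u := by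
      apply suffix_eq_of_length (List.drop_suffix _ _) hu
      simp; omega
    rwa [this]
  · intro hp
    exact ⟨_, List.drop_suffix _ _, hp, by simp; omega⟩

end Stmt8

namespace Stmt8
open List

variable {α : Type*}

theorem mem_sspAt_set {w : List α} {i t : ℕ} (h : PP w i t) (h2 : 2 ≤ t) :
    (t : ℕ∞) ∈ {ℓ : ℕ∞ | ∃ u : List α, u <:+ w.take i ∧ IsPal u ∧ 2 ≤ u.length ∧ (u.length : ℕ∞) = ℓ} := by
  obtain ⟨u, hu, hp, rfl⟩ := h
  exact ⟨u, hu, hp, h2, rfl⟩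

theorem sspAt_le {w : List α} {i t : ℕ} (h2 : 2 ≤ t) (h : PP w i t) :
    sspAt w i ≤ (t : ℕ∞) := sInf_le (mem_sspAt_set h h2)

theorem sspAt_eq_top_iff {w : List α} {i : ℕ} :
    sspAt w i = ⊤ ↔ ∀ t, 2 ≤ t → ¬ PP w i t := by
  constructor
  · intro h t h2 hp
    have := sspAt_le h2 hp
    rw [h, top_le_iff] at this
    exact (ENat.coe_ne_top t) this
  · intro h
    rw [sspAt, sInf_eq_top]
    rintro ℓ ⟨u, hu, hp, h2, rfl⟩
    exact absurd ⟨u, hu, hp, rfl⟩ (h u.length h2)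

theorem sspAt_spec {w : List α} {i : ℕ} (h : sspAt w i ≠ ⊤) :
    2 ≤ (sspAt w i).toNat ∧ PP w i (sspAt w i).toNat := by
  set T : Set ℕ := {t | PP w i t ∧ 2 ≤ t} with hT
  have hTne : T.Nonempty := by
    by_contra hc
    apply h
    rw [sspAt_eq_top_iff]
    intro t h2 hp
    exact hc ⟨t, hp, h2⟩
  have hmem := Nat.sInf_mem hTne
  have heq : sspAt w i = ((sInf T : ℕ) : ℕ∞) := by
    apply _root_.le_antisymm
    · exact sspAt_le hmem.2 hmem.1
    · rw [sspAt]
      apply le_sInf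
      rintro ℓ ⟨u, hu, hp, h2, rfl⟩
      have : sInf T ≤ u.length := Nat.sInf_le ⟨⟨u, hu, hp, rfl⟩, h2⟩
      exact_mod_cast this
  rw [heq]
  simpa using ⟨hmem.2, hmem.1⟩

end Stmt8

namespace Stmt8
open List

variable {α : Type*}

/-- the character immediately before the length-`g` suffix of `w[1..m]` is `a`. -/
def PreCh (w : List α) (m g : ℕ) (a : α) : Prop :=
  ∃ z u : List α, w.take m = z ++ a :: u ∧ u.length = g

theorem preCh_unique {w : List α} {m g : ℕ} {a b : α}
    (h1 : PreCh w m g a) (h2 : PreCh w m g b) : a = b := by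
  obtain ⟨z, u, he, hl⟩ := h1
  obtain ⟨z', u', he', hl'⟩ := h2
  rw [he] at he'
  have := (List.append_inj' he' (by simp [hl, hl'])).2
  exact (List.cons_eq_cons.1 this).1

theorem preCh_getElem {w : List α} {m g : ℕ} {a : α} (hm : m ≤ w.length) :
    PreCh w m g a ↔ g < m ∧ w[m - g - 1]? = some a := by
  constructor
  · rintro ⟨z, u, he, rfl⟩
    have hlen : m = z.length + 1 + u.length := by
      have := congrArg List.length he
      simp at this
      omega
    have hg : u.length < m := by omega
    refine ⟨hg, ?_⟩
    have h1 : w[m - u.length - 1]? = (w.take m)[m - u.length - 1]? := by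
      rw [List.getElem?_take]
      simp [show m - u.length - 1 < m by omega]
    rw [h1, he, List.getElem?_append]
    simp [show m - u.length - 1 = z.length by omega]
  · rintro ⟨hg, ha⟩
    set l := w.take m with hl
    have hll : l.length = m := by simp [hl]; omega
    have h1 : m - g - 1 < l.length := by omega
    refine ⟨l.take (m - g - 1), l.drop (m - g), ?_, by rw [List.length_drop, hll]; omega⟩
    have h2 : l[m - g - 1]? = some a := by
      rw [hl, List.getElem?_take]; simp [show m - g - 1 < m by omega]; exact ha
    have h3 : l[m - g - 1] = a := by
      have := List.getElem?_eq_getElem h1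
      rw [h2] at this; exact (Option.some_injective _ this.symm)
    calc l = l.take (m - g - 1) ++ l.drop (m - g - 1) := by simp
    _ = l.take (m - g - 1) ++ a :: l.drop (m - g) := by
        have he2 : m - g - 1 + 1 = m - g := by omega
        rw [List.drop_eq_getElem_cons h1, h3, he2]

/-- Extension characterization: pal suffixes of length `g+2` at `m+1`. -/
theorem PP_succ {w : List α} {m g : ℕ} (hm : m < w.length) :
    PP w (m + 1) (g + 2) ↔ ∃ z u, w.take m = z ++ w[m] :: u ∧ IsPal u ∧ u.length = g := by
  have htake : w.take (m + 1) = w.take m ++ [w[m]] := by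
    rw [List.take_succ, List.getElem?_eq_getElem hm]
    rfl
  constructor
  · rintro ⟨u', hu', hp', hl'⟩
    obtain (rfl | ⟨a, r, rfl⟩) : u' = [] ∨ ∃ a r, u' = a :: r := by
      cases u' with
      | nil => exact Or.inl rfl
      | cons a r => exact Or.inr ⟨a, r, rfl⟩
    · simp at hl'
    obtain (hr | ⟨q, b, hq⟩) := List.eq_nil_or_concat r
    · rw [hr] at hl'; simp at hl'
    rw [hq, List.concat_eq_append] at hp' hu' hl'
    obtain ⟨hab, hqpal⟩ := pal_wrap.1 hp'
    obtain ⟨z, hz⟩ := hu'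
    rw [htake] at hz
    have hz' : (z ++ (a :: q)) ++ [b] = w.take m ++ [w[m]] := by
      rw [← hz]; simp
    obtain ⟨hz2, hb⟩ := List.append_inj' hz' (by simp)
    have hb' : b = w[m] := by simpa using hb
    subst hab
    exact ⟨z, q, by rw [← hz2, hb'], hqpal, by simp at hl'; omega⟩
  · rintro ⟨z, u, he, hp, rfl⟩
    refine ⟨w[m] :: u ++ [w[m]], ⟨z, ?_⟩, pal_wrap.2 ⟨rfl, hp⟩, by simp⟩
    rw [htake, he]
    simp

/-- Extension: `PP` at `m+1` of length `g+2` iff pal suffix of length `g` at `m`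
    preceded by character `w[m]`. -/
theorem PP_succ' {w : List α} {m g : ℕ} (hm : m < w.length) :
    PP w (m + 1) (g + 2) ↔ PP w m g ∧ PreCh w m g w[m] := by
  rw [PP_succ hm]
  constructor
  · rintro ⟨z, u, he, hp, rfl⟩
    exact ⟨⟨u, ⟨z ++ [w[m]], by rw [he]; simp⟩, hp, rfl⟩, ⟨z, u, he, rfl⟩⟩
  · rintro ⟨⟨u₀, hu₀, hp₀, hl₀⟩, ⟨z, u, he, hl⟩⟩
    have : u = u₀ := by
      apply suffix_eq_of_length _ hu₀ (by rw [hl, hl₀])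
      exact ⟨z ++ [w[m]], by rw [he]; simp⟩
    subst this
    exact ⟨z, u, he, hp₀, hl⟩

end Stmt8

namespace Stmt8
open List

variable {α : Type*}

/-- Reflection: for pal suffixes `u` and `v ++ a₁ :: u` at `m`, the preceding
characters are equal iff a certain shorter pal suffix exists. -/
theorem reflect {w : List α} {m : ℕ} {z v u : List α} {a₁ a₂ : α}
    (hm : m ≤ w.length) (hu : IsPal u) (hP : IsPal (v ++ a₁ :: u))
    (hz : w.take m = z ++ a₂ :: (v ++ a₁ :: u)) :
    (a₂ = a₁ ↔ PP w (z.length + u.length + 2) (u.length + 2)) := by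
  have hP' : v ++ a₁ :: u = u ++ a₁ :: v.reverse := by
    have hu' : u.reverse = u := hu
    conv_lhs => rw [← hP]
    rw [List.reverse_append, List.reverse_cons, hu']
    simp
  set m' := z.length + u.length + 2 with hm'
  have hmlen : m = z.length + 1 + v.length + 1 + u.length := by
    have := congrArg List.length hz
    simp at this
    omega
  have htake : w.take m' = z ++ a₂ :: (u ++ [a₁]) := by
    have h1 : w.take m' = (w.take m).take m' := by
      rw [List.take_take]
      congr 1
      omega
    rw [h1, hz, hP']
    have h2 : m' = z.length + ((u.length + 1) + 1) := by omega
    rw [h2, List.take_length_add_append, List.take_succ_cons,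
      show u.length + 1 = u.length + 1 from rfl, List.take_length_add_append]
    simp
  have hsuf : (a₂ :: (u ++ [a₁])) <:+ w.take m' := ⟨z, by rw [htake]⟩
  constructor
  · intro he
    exact ⟨a₂ :: (u ++ [a₁]), hsuf, pal_wrap.2 ⟨he, hu⟩, by simp⟩
  · rintro ⟨u', hu', hp', hl'⟩
    have : u' = a₂ :: (u ++ [a₁]) := suffix_eq_of_length hu' hsuf (by simp [hl'])
    subst this
    exact (pal_wrap.1 hp').1

end Stmt8

namespace Stmt8
open List

variable {α : Type*}

theorem suffix_of_suffix_le {s t l : List α} (hs : s <:+ l) (ht : t <:+ l)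
    (h : s.length ≤ t.length) : s <:+ t := by
  have hd : (t.drop (t.length - s.length)) <:+ l := (List.drop_suffix _ _).trans ht
  have : s = t.drop (t.length - s.length) :=
    suffix_eq_of_length hs hd (by simp; omega)
  rw [this]
  exact List.drop_suffix _ _

theorem eqcond {w : List α} {m g g' : ℕ} {a a' : α} (hm : m ≤ w.length)
    (hg : PP w m g) (hg' : PP w m g') (hlt : g < g')
    (ha : PreCh w m g a) (ha' : PreCh w m g' a') :
    (a' = a ↔ PP w (m - g' + g + 1) (g + 2)) := by
  obtain ⟨u₀, hu₀s, hu₀p, hu₀l⟩ := hg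
  obtain ⟨u₁, hu₁s, hu₁p, hu₁l⟩ := hg'
  obtain ⟨z, u, hze, hul⟩ := ha
  obtain ⟨z', u', hze', hul'⟩ := ha'
  have hus : u <:+ w.take m := ⟨z ++ [a], by rw [hze]; simp⟩
  have hu's : u' <:+ w.take m := ⟨z' ++ [a'], by rw [hze']; simp⟩
  have hu : u = u₀ := suffix_eq_of_length hus hu₀s (by rw [hul, hu₀l])
  have hu' : u' = u₁ := suffix_eq_of_length hu's hu₁s (by rw [hul', hu₁l])
  have hup : IsPal u := hu ▸ hu₀p
  have hu'p : IsPal u' := hu' ▸ hu₁p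
  have h1 : (a :: u) <:+ w.take m := ⟨z, by rw [hze]⟩
  have h3 : (a :: u) <:+ u' := suffix_of_suffix_le h1 hu's (by simp only [List.length_cons, hul, hul']; omega)
  obtain ⟨v, hv⟩ := h3
  have hz2 : w.take m = z' ++ a' :: (v ++ a :: u) := by rw [hze', ← hv]
  have hzl : m = z'.length + 1 + g' := by
    have h4 := congrArg List.length hze'
    simp at h4
    omega
  have href := reflect hm hup (by rw [hv]; exact hu'p) hz2
  rw [show m - g' + g + 1 = z'.length + u.length + 2 from by omega,
    show g + 2 = u.length + 2 from by omega]
  exact href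

end Stmt8

namespace Stmt8
open List

variable {α : Type*}

/-- ssp-expressible condition: the preceding chars of pal suffixes of lengths
`g` and `g'` at `m` agree. -/
def EqC (w : List α) (m g g' : ℕ) : Prop :=
  g = g' ∨ (g < g' ∧ PP w (m - g' + g + 1) (g + 2)) ∨ (g' < g ∧ PP w (m - g + g' + 1) (g' + 2))

theorem preCh_exists {w : List α} {m g : ℕ} (hg : g < m) (hm : m ≤ w.length) :
    ∃ a, PreCh w m g a := by
  have h1 : m - g - 1 < w.length := by omega
  exact ⟨w[m - g - 1], (preCh_getElem hm).2 ⟨hg, List.getElem?_eq_getElem h1⟩⟩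

theorem PP_char {w : List α} {m t : ℕ} (hm : m < w.length) (ht : 2 ≤ t) :
    PP w (m + 1) t ↔ (sspAt w (m + 1) ≠ ⊤ ∧ ∃ g, t = g + 2 ∧ g + 2 ≤ m + 1 ∧ PP w m g ∧
      EqC w m g ((sspAt w (m + 1)).toNat - 2)) := by
  have hm1 : m + 1 ≤ w.length := hm
  constructor
  · intro h
    have hne : sspAt w (m + 1) ≠ ⊤ := by
      intro hc
      rw [sspAt_eq_top_iff] at hc
      exact hc t ht h
    obtain ⟨hs2, hsP⟩ := sspAt_spec hne
    set s₀ := (sspAt w (m + 1)).toNat with hs₀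
    set g₀ := s₀ - 2 with hg₀
    have hs : s₀ = g₀ + 2 := by omega
    obtain ⟨g, rfl⟩ : ∃ g, t = g + 2 := ⟨t - 2, by omega⟩
    have h1 := (PP_succ' hm).1 h
    rw [hs] at hsP
    have h0 := (PP_succ' hm).1 hsP
    have hle := PP_le h
    refine ⟨hne, g, rfl, by omega, h1.1, ?_⟩
    rcases Nat.lt_trichotomy g g₀ with hlt | heq | hgt
    · exact Or.inr (Or.inl ⟨hlt, (eqcond (w := w) (m := m) (by omega) h1.1 h0.1 hlt h1.2 h0.2).1 rfl⟩)
    · exact Or.inl heq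
    · exact Or.inr (Or.inr ⟨hgt, (eqcond (w := w) (m := m) (by omega) h0.1 h1.1 hgt h0.2 h1.2).1 rfl⟩)
  · rintro ⟨hne, g, rfl, hg2, hPg, hEq⟩
    obtain ⟨hs2, hsP⟩ := sspAt_spec hne
    set s₀ := (sspAt w (m + 1)).toNat with hs₀
    set g₀ := s₀ - 2 with hg₀
    have hs : s₀ = g₀ + 2 := by omega
    rw [hs] at hsP
    have h0 := (PP_succ' hm).1 hsP
    have hg₀m : g₀ < m := by
      have := PP_le hsP
      omega
    rcases hEq with heq | ⟨hlt, hPP⟩ | ⟨hgt, hPP⟩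
    · subst heq
      exact (PP_succ' hm).2 ⟨hPg, h0.2⟩
    · -- g < g₀
      obtain ⟨a, ha⟩ := preCh_exists (w := w) (m := m) (g := g) (by omega) (by omega)
      have hiff := eqcond (w := w) (m := m) (by omega) hPg h0.1 hlt ha h0.2
      have : w[m] = a := hiff.2 hPP
      rw [← this] at ha
      exact (PP_succ' hm).2 ⟨hPg, ha⟩
    · -- g₀ < g
      obtain ⟨a, ha⟩ := preCh_exists (w := w) (m := m) (g := g) (by omega) (by omega)
      have hiff := eqcond (w := w) (m := m) (by omega) h0.1 hPg hgt h0.2 ha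
      have : a = w[m] := hiff.2 hPP
      rw [this] at ha
      exact (PP_succ' hm).2 ⟨hPg, ha⟩

/-- main induction: words with the same ssp have the same palindromic structure. -/
theorem PSeq {x y : List α} (hlen : x.length = y.length)
    (hssp : ∀ i, 1 ≤ i → i ≤ x.length → sspAt x i = sspAt y i) :
    ∀ m t, m ≤ x.length → (PP x m t ↔ PP y m t) := by
  intro m
  induction m using Nat.strong_induction_on with
  | _ m IH =>
    intro t hm
    match t with
    | 0 => simp [PP_zero]
    | 1 =>
      constructor
      · intro h
        have := PP_le h
        exact PP_one (by omega) (by omega)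
      · intro h
        have := PP_le h
        exact PP_one (by omega) (by omega)
    | (g + 2) =>
      match m with
      | 0 =>
        constructor <;> (intro h; have := PP_le h; omega)
      | (m' + 1) =>
        have hm' : m' < x.length := by omega
        have hm'y : m' < y.length := by omega
        have hsspe : sspAt x (m' + 1) = sspAt y (m' + 1) := hssp (m' + 1) (by omega) (by omega)
        rw [PP_char hm' (by omega), PP_char hm'y (by omega), hsspe]
        have hEqC : ∀ g g₀, g + 2 ≤ m' + 1 → g₀ + 2 ≤ m' + 1 →
            (EqC x m' g g₀ ↔ EqC y m' g g₀) := by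
          intro g g₀ hgle hg₀le
          unfold EqC
          constructor
          · rintro (heq | ⟨hlt, hPP⟩ | ⟨hgt, hPP⟩)
            · exact Or.inl heq
            · exact Or.inr (Or.inl ⟨hlt, (IH (m' - g₀ + g + 1) (by omega) (g + 2) (by omega)).1 hPP⟩)
            · exact Or.inr (Or.inr ⟨hgt, (IH (m' - g + g₀ + 1) (by omega) (g₀ + 2) (by omega)).1 hPP⟩)
          · rintro (heq | ⟨hlt, hPP⟩ | ⟨hgt, hPP⟩)
            · exact Or.inl heq
            · exact Or.inr (Or.inl ⟨hlt, (IH (m' - g₀ + g + 1) (by omega) (g + 2) (by omega)).2 hPP⟩)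
            · exact Or.inr (Or.inr ⟨hgt, (IH (m' - g + g₀ + 1) (by omega) (g₀ + 2) (by omega)).2 hPP⟩)
        have hg₀le : sspAt y (m' + 1) ≠ ⊤ → (sspAt y (m' + 1)).toNat - 2 + 2 ≤ m' + 1 := by
          intro hne
          obtain ⟨h2, hPP⟩ := sspAt_spec hne
          have h3 := PP_le hPP
          omega
        constructor
        · rintro ⟨hne, g', heq, hle, hPg, hE⟩
          obtain rfl : g = g' := by omega
          exact ⟨hne, g, rfl, hle, (IH m' (by omega) g (by omega)).1 hPg,
            (hEqC g _ hle (hg₀le hne)).1 hE⟩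
        · rintro ⟨hne, g', heq, hle, hPg, hE⟩
          obtain rfl : g = g' := by omega
          exact ⟨hne, g, rfl, hle, (IH m' (by omega) g (by omega)).2 hPg,
            (hEqC g _ hle (hg₀le hne)).2 hE⟩

end Stmt8

namespace Stmt8
open List

variable {α : Type*}

theorem sspAt_eq_coe_iff {w : List α} {i s : ℕ} :
    sspAt w i = (s : ℕ∞) ↔ (2 ≤ s ∧ PP w i s ∧ ∀ t, 2 ≤ t → PP w i t → s ≤ t) := by
  constructor
  · intro h
    have hne : sspAt w i ≠ ⊤ := by rw [h]; exact ENat.coe_ne_top s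
    obtain ⟨h2, hPP⟩ := sspAt_spec hne
    rw [h] at h2 hPP
    simp at h2 hPP
    refine ⟨h2, hPP, fun t ht hp => ?_⟩
    have := sspAt_le ht hp
    rw [h] at this
    exact_mod_cast this
  · rintro ⟨h2, hPP, hmin⟩
    apply _root_.le_antisymm
    · exact sspAt_le h2 hPP
    · rw [sspAt]
      apply le_sInf
      rintro ℓ ⟨u, hu, hp, hl2, rfl⟩
      exact_mod_cast hmin u.length hl2 ⟨u, hu, hp, rfl⟩

theorem take_cons_of_pos {w : List α} {c : α} {i : ℕ} (h : 1 ≤ i) :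
    (c :: w).take i = c :: w.take (i - 1) := by
  obtain ⟨i', rfl⟩ : ∃ i', i = i' + 1 := ⟨i - 1, by omega⟩
  simp

theorem PP_cons {w : List α} {c : α} {i t : ℕ} (h1 : 1 ≤ i) (h2 : i ≤ w.length + 1) :
    PP (c :: w) i t ↔ PP w (i - 1) t ∨ (t = i ∧ IsPal (c :: w.take (i - 1))) := by
  rw [PP, take_cons_of_pos h1]
  constructor
  · rintro ⟨u, hu, hp, rfl⟩
    rcases List.suffix_cons_iff.1 hu with rfl | hu'
    · right
      refine ⟨?_, hp⟩
      simp
      omega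
    · exact Or.inl ⟨u, hu', hp, rfl⟩
  · rintro (⟨u, hu, hp, rfl⟩ | ⟨ht, hp⟩)
    · exact ⟨u, hu.trans (List.suffix_cons c _), hp, rfl⟩
    · refine ⟨c :: w.take (i - 1), List.suffix_rfl, hp, ?_⟩
      simp
      omega

theorem pal_cons_take {w : List α} {c : α} {j : ℕ} (hj : j < w.length) :
    IsPal (c :: w.take (j + 1)) ↔ IsPal (w.take j) ∧ w[j] = c := by
  have h1 : w.take (j + 1) = w.take j ++ [w[j]] := by
    rw [List.take_succ, List.getElem?_eq_getElem hj]; rfl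
  rw [h1, pal_wrap]
  constructor
  · rintro ⟨h, h2⟩; exact ⟨h2, h.symm⟩
  · rintro ⟨h2, h⟩; exact ⟨h.symm, h2⟩

theorem sspAt_cons_one {w : List α} {c : α} : sspAt (c :: w) 1 = ⊤ := by
  rw [sspAt_eq_top_iff]
  intro t ht hp
  have := PP_le hp
  omega

theorem sspAt_cons_of_ne_top {w : List α} {c : α} {i : ℕ} (hi : 2 ≤ i) (hile : i ≤ w.length + 1)
    (h : sspAt w (i - 1) ≠ ⊤) : sspAt (c :: w) i = sspAt w (i - 1) := by
  obtain ⟨h2, hPP⟩ := sspAt_spec h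
  set s := (sspAt w (i - 1)).toNat with hs
  have hcoe : sspAt w (i - 1) = (s : ℕ∞) := (ENat.coe_toNat h).symm
  rw [hcoe, sspAt_eq_coe_iff]
  refine ⟨h2, (PP_cons (by omega) hile).2 (Or.inl hPP), fun t ht hp => ?_⟩
  rcases (PP_cons (by omega) hile).1 hp with hp' | ⟨rfl, -⟩
  · have := sspAt_le ht hp'
    rw [hcoe] at this
    exact_mod_cast this
  · have := PP_le hPP
    omega

theorem sspAt_cons_of_pal {w : List α} {c : α} {i : ℕ} (hi : 2 ≤ i) (hile : i ≤ w.length + 1)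
    (h : sspAt w (i - 1) = ⊤) (hp : IsPal (c :: w.take (i - 1))) :
    sspAt (c :: w) i = (i : ℕ∞) := by
  rw [sspAt_eq_coe_iff]
  refine ⟨hi, (PP_cons (by omega) hile).2 (Or.inr ⟨rfl, hp⟩), fun t ht hpt => ?_⟩
  rcases (PP_cons (by omega) hile).1 hpt with hp' | ⟨rfl, -⟩
  · exact absurd hp' (sspAt_eq_top_iff.1 h t ht)
  · exact le_refl t

theorem sspAt_cons_of_not_pal {w : List α} {c : α} {i : ℕ} (hi : 2 ≤ i) (hile : i ≤ w.length + 1)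
    (h : sspAt w (i - 1) = ⊤) (hp : ¬ IsPal (c :: w.take (i - 1))) :
    sspAt (c :: w) i = ⊤ := by
  rw [sspAt_eq_top_iff]
  intro t ht hpt
  rcases (PP_cons (by omega) hile).1 hpt with hp' | ⟨rfl, hc⟩
  · exact absurd hp' (sspAt_eq_top_iff.1 h t ht)
  · exact hp hc

theorem rep_not_top {w : List α} {j1 j2 : ℕ} (h12 : j1 < j2) (hj2 : j2 < w.length)
    (hp1 : IsPal (w.take j1)) (hp2 : IsPal (w.take j2))
    (hc : w[j1]'(by omega) = w[j2]'hj2) :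
    sspAt w (j2 + 1) ≠ ⊤ := by
  intro htop
  have hj1 : j1 < w.length := by omega
  have hPP : PP w (j2 + 1) (j1 + 2) := by
    rw [PP_succ hj2]
    refine ⟨((w.take j2).drop (j1 + 1)).reverse, w.take j1, ?_, hp1, by simp; omega⟩
    have h1 : w.take j2 = w.take (j1 + 1) ++ (w.take j2).drop (j1 + 1) := by
      conv_lhs => rw [← List.take_append_drop (j1 + 1) (w.take j2)]
      rw [List.take_take, min_eq_left (by omega)]
    have h2 : w.take (j1 + 1) = w.take j1 ++ [w[j1]] := by
      rw [List.take_succ, List.getElem?_eq_getElem hj1]; rfl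
    conv_lhs => rw [← hp2, h1, h2]
    rw [List.reverse_append, List.reverse_append, hp1, hc]
    simp
  exact sspAt_eq_top_iff.1 htop (j1 + 2) (by omega) hPP

end Stmt8

namespace Stmt8
open List

variable {α : Type*}

theorem pal_reverse {l : List α} (h : IsPal l) : IsPal l.reverse := by
  rw [IsPal, List.reverse_reverse]
  exact h.symm

theorem pal_getElem? {l : List α} (hp : IsPal l) {i : ℕ} (hi : i < l.length) :
    l[i]? = l[l.length - 1 - i]? := by
  conv_lhs => rw [← hp]
  exact List.getElem?_reverse hi

theorem pal_take_getElem? {w : List α} {j i : ℕ} (hj : j ≤ w.length)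
    (hp : IsPal (w.take j)) (hi : i < j) : w[i]? = w[j - 1 - i]? := by
  have hlj : (w.take j).length = j := by simp; omega
  have h1 : i < (w.take j).length := by omega
  have := pal_getElem? hp h1
  rw [hlj] at this
  rw [List.getElem?_take, List.getElem?_take] at this
  simpa [hi, show j - 1 - i < j from by omega] using this

theorem suffix_pal_eq {l u : List α} (hl : IsPal l) (hu : u <:+ l) :
    u = (l.take u.length).reverse := by
  have h1 : u <:+ l.reverse := by rwa [hl]
  have h2 : u.reverse <+: l := by
    rw [← List.reverse_suffix]
    simpa using h1
  have h3 : u.reverse = l.take u.length := by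
    rw [List.prefix_iff_eq_take] at h2
    simpa using h2
  rw [← h3]
  simp

/-- the set of (lengths of) palindromic proper prefixes of `w` followed by `a`. -/
def Grp (w : List α) (a : α) : Set ℕ :=
  {j | j < w.length ∧ IsPal (w.take j) ∧ w[j]? = some a}

/-- extension characterization at a palindromic prefix. -/
theorem PP_at_pal_succ {w : List α} {j k : ℕ} (hj : j < w.length) (hk : k < j)
    (hpj : IsPal (w.take j)) :
    PP w (j + 1) (k + 2) ↔ (IsPal (w.take k) ∧ w[k]? = w[j]?) := by
  rw [PP_succ hj]
  constructor
  · rintro ⟨z, u, he, hpu, hlu⟩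
    have hus : u <:+ w.take j := ⟨z ++ [w[j]], by rw [he]; simp⟩
    have hueq : u = ((w.take j).take u.length).reverse := suffix_pal_eq hpj hus
    rw [List.take_take, min_eq_left (by omega), hlu] at hueq
    have htk : w.take k = u.reverse := by rw [hueq]; simp
    have hpk : IsPal (w.take k) := by rw [htk]; exact pal_reverse hpu
    refine ⟨hpk, ?_⟩
    have hpre : PreCh w j k w[j] := ⟨z, u, he, hlu⟩
    have hchar := ((preCh_getElem (by omega)).1 hpre).2
    have e1 := pal_take_getElem? (by omega) hpj hk
    rw [show j - 1 - k = j - k - 1 from by omega] at e1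
    rw [e1, hchar, List.getElem?_eq_getElem hj]
  · rintro ⟨hpk, hchar⟩
    -- construct as in rep_not_top
    refine ⟨((w.take j).drop (k + 1)).reverse, w.take k, ?_, hpk, by simp; omega⟩
    have h1 : w.take j = w.take (k + 1) ++ (w.take j).drop (k + 1) := by
      conv_lhs => rw [← List.take_append_drop (k + 1) (w.take j)]
      rw [List.take_take, min_eq_left (by omega)]
    have hkl : k < w.length := by omega
    have h2 : w.take (k + 1) = w.take k ++ [w[k]] := by
      rw [List.take_succ, List.getElem?_eq_getElem hkl]; rfl
    have hck : w[k] = w[j] := by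
      have := hchar
      rw [List.getElem?_eq_getElem hkl, List.getElem?_eq_getElem hj] at this
      exact Option.some_injective _ this
    conv_lhs => rw [← hpj, h1, h2]
    rw [List.reverse_append, List.reverse_append, hpk, hck]
    simp

/-- the minimum of a group is a representative: no short pal suffix at it. -/
theorem sInf_grp_mem_reps {w : List α} {a : α} (h : (Grp w a).Nonempty) :
    sspAt w (sInf (Grp w a) + 1) = ⊤ := by
  set j := sInf (Grp w a) with hj
  have hmem : j ∈ Grp w a := Nat.sInf_mem h
  obtain ⟨hjn, hpj, hchar⟩ := hmem
  by_contra hne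
  obtain ⟨h2, hPP⟩ := sspAt_spec hne
  set s := (sspAt w (j + 1)).toNat with hs
  have hsle := PP_le hPP
  set k := s - 2 with hk
  have hksucc : s = k + 2 := by omega
  rw [hksucc] at hPP
  have hkj : k < j := by omega
  have := (PP_at_pal_succ hjn hkj hpj).1 hPP
  have hkmem : k ∈ Grp w a := ⟨by omega, this.1, by rw [this.2, hchar]⟩
  have := Nat.sInf_le hkmem
  omega

/-- pal suffixes of `w.reverse ++ [a]` correspond to pal prefixes of `w` followed by `a`. -/
theorem PP_rev {w : List α} {a : α} {k : ℕ} (hk : k < w.length) :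
    PP (w.reverse ++ [a]) (w.length + 1) (k + 2) ↔
      (IsPal (w.take k) ∧ w[k]? = some a) := by
  set n := w.length with hn
  have hlen : (w.reverse ++ [a]).length = n + 1 := by simp [hn]
  have hget : (w.reverse ++ [a])[n]'(by omega) = a := by
    rw [List.getElem_append_right] <;> simp [hn]
  have hmn : n < (w.reverse ++ [a]).length := by omega
  rw [PP_succ hmn, hget]
  have htk : (w.reverse ++ [a]).take n = w.reverse := by
    have : n = w.reverse.length := by simp [hn]
    rw [this, List.take_left]
  rw [htk]
  constructor
  · rintro ⟨z, u, he, hpu, hlu⟩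
    have hus : u <:+ w.reverse := ⟨z ++ [a], by rw [he]; simp⟩
    have h2 : u.reverse <+: w := by rw [← List.reverse_suffix]; simpa using hus
    have h3 : u.reverse = w.take k := by
      rw [List.prefix_iff_eq_take] at h2
      simpa [hlu] using h2
    have hpk : IsPal (w.take k) := by rw [← h3]; exact pal_reverse hpu
    refine ⟨hpk, ?_⟩
    have hpre : PreCh (w.reverse) n k a := by
      refine ⟨z, u, ?_, hlu⟩
      rw [List.take_of_length_le (by simp [hn])]
      exact he
    have hchar := ((preCh_getElem (by simp [hn])).1 hpre).2
    rw [List.getElem?_reverse (by omega)] at hchar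
    rw [show n - 1 - (n - k - 1) = k from by omega] at hchar
    exact hchar
  · rintro ⟨hpk, hchar⟩
    refine ⟨(w.drop (k + 1)).reverse, w.take k, ?_, hpk, by simp; omega⟩
    have hkl : k < w.length := hk
    have h2 : w.take (k + 1) = w.take k ++ [w[k]] := by
      rw [List.take_succ, List.getElem?_eq_getElem hkl]; rfl
    have hck : w[k] = a := by
      rw [List.getElem?_eq_getElem hkl] at hchar
      exact Option.some_injective _ hchar
    conv_lhs => rw [← List.take_append_drop (k + 1) w, h2]
    rw [List.reverse_append, List.reverse_append, hpk, hck]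
    simp

end Stmt8

namespace Stmt8
open List

variable {α : Type*}

/-- representatives: minimal members of suffix-pal-groups of pal prefixes. -/
def Reps (w : List α) : Set ℕ :=
  {j | j < w.length ∧ IsPal (w.take j) ∧ sspAt w (j + 1) = ⊤}

theorem rep_lt_contra {w : List α} {j1 j2 : ℕ} (h12 : j1 < j2) (hj2 : j2 < w.length)
    (hp1 : IsPal (w.take j1)) (hp2 : IsPal (w.take j2)) (hc : w[j1]? = w[j2]?) :
    sspAt w (j2 + 1) ≠ ⊤ := fun htop => by
  have := (PP_at_pal_succ hj2 h12 hp2).2 ⟨hp1, hc⟩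
  exact sspAt_eq_top_iff.1 htop _ (by omega) this

theorem grp_min_mem_reps {w : List α} {a : α} (h : (Grp w a).Nonempty) :
    sInf (Grp w a) ∈ Reps w := by
  obtain ⟨h1, h2, h3⟩ := Nat.sInf_mem h
  exact ⟨h1, h2, sInf_grp_mem_reps h⟩

theorem reps_eq_grp_min {w : List α} {j : ℕ} (h : j ∈ Reps w) :
    ∃ a, w[j]? = some a ∧ (Grp w a).Nonempty ∧ j = sInf (Grp w a) := by
  obtain ⟨hjn, hpj, htop⟩ := h
  refine ⟨w[j]'hjn, List.getElem?_eq_getElem hjn, ⟨j, hjn, hpj, List.getElem?_eq_getElem hjn⟩, ?_⟩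
  set a := w[j]'hjn with ha
  have hmem : j ∈ Grp w a := ⟨hjn, hpj, List.getElem?_eq_getElem hjn⟩
  have hle := Nat.sInf_le hmem
  rcases Nat.lt_or_ge (sInf (Grp w a)) j with hlt | hge
  · obtain ⟨h1, h2, h3⟩ := Nat.sInf_mem (⟨j, hmem⟩ : (Grp w a).Nonempty)
    exact absurd htop (rep_lt_contra hlt hjn h2 hpj (by rw [h3, List.getElem?_eq_getElem hjn]))
  · omega

theorem reps_char_inj {w : List α} {j1 j2 : ℕ} (h1 : j1 ∈ Reps w) (h2 : j2 ∈ Reps w)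
    (hc : w[j1]? = w[j2]?) : j1 = j2 := by
  by_contra hne
  rcases Nat.lt_or_ge j1 j2 with hlt | hge
  · exact rep_lt_contra hlt h2.1 h1.2.1 h2.2.1 hc h2.2.2
  · exact rep_lt_contra (by omega) h1.1 h2.2.1 h1.2.1 hc.symm h1.2.2

theorem mem_palSufGroups_rev {w : List α} {c₀ : Option α} :
    c₀ ∈ palSufGroups w.reverse ↔ ∃ j, j < w.length ∧ IsPal (w.take j) ∧ c₀ = w[j]? := by
  constructor
  · rintro ⟨u, ⟨hus, hup, hul⟩, hlabel⟩
    refine ⟨u.length, by simpa using hul, ?_, ?_⟩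
    · have h2 : u.reverse <+: w := by rw [← List.reverse_suffix]; simpa using hus
      rw [List.prefix_iff_eq_take] at h2
      simp at h2
      rw [← h2]
      exact pal_reverse hup
    · rw [← hlabel]
      rw [List.getElem?_reverse (by simp at hul ⊢; omega)]
      congr 1
      simp at hul ⊢
      omega
  · rintro ⟨j, hjn, hpj, rfl⟩
    refine ⟨(w.take j).reverse, ⟨?_, pal_reverse hpj, by simp; omega⟩, ?_⟩
    · rw [List.reverse_suffix]
      exact List.take_prefix j w
    · rw [List.getElem?_reverse (by simp; omega)]
      congr 1
      simp
      omega

theorem repLen_rev {w : List α} {a : α} :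
    repLen w.reverse (some a) = sInf (Grp w a) := by
  rw [repLen]
  congr 1
  ext ℓ
  simp only [Set.mem_setOf_eq, Grp]
  constructor
  · rintro ⟨u, ⟨hus, hup, hul⟩, hlabel, rfl⟩
    have h2 : u.reverse <+: w := by rw [← List.reverse_suffix]; simpa using hus
    rw [List.prefix_iff_eq_take] at h2
    simp at h2
    refine ⟨by simpa using hul, by rw [← h2]; exact pal_reverse hup, ?_⟩
    rw [← hlabel, List.getElem?_reverse (by simp at hul ⊢; omega)]
    congr 1
    simp at hul ⊢
    omega
  · rintro ⟨hjn, hpj, hchar⟩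
    refine ⟨(w.take ℓ).reverse, ⟨?_, pal_reverse hpj, by simp; omega⟩, ?_, by simp; omega⟩
    · rw [List.reverse_suffix]
      exact List.take_prefix ℓ w
    · rw [List.getElem?_reverse (by simp; omega), ← hchar]
      congr 1
      simp
      omega

theorem groupIdOf_rev {w : List α} {c : α} (h : (Grp w c).Nonempty) :
    groupIdOf w.reverse (some c) =
      Set.ncard {j | j ∈ Reps w ∧ j ≤ sInf (Grp w c)} := by
  rw [groupIdOf]
  have hset : {c₀ | c₀ ∈ palSufGroups w.reverse ∧
      repLen w.reverse c₀ ≤ repLen w.reverse (some c)} =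
      (fun j => w[j]?) '' {j | j ∈ Reps w ∧ j ≤ sInf (Grp w c)} := by
    ext c₀
    simp only [Set.mem_setOf_eq, Set.mem_image]
    constructor
    · rintro ⟨hg, hle⟩
      obtain ⟨j₀, hj₀n, hpj₀, rfl⟩ := mem_palSufGroups_rev.1 hg
      set a := w[j₀]'hj₀n with ha
      have hja : w[j₀]? = some a := List.getElem?_eq_getElem hj₀n
      have hane : (Grp w a).Nonempty := ⟨j₀, hj₀n, hpj₀, hja⟩
      set r := sInf (Grp w a) with hr
      have hrR : r ∈ Reps w := grp_min_mem_reps hane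
      have hrc : w[r]? = some a := (Nat.sInf_mem hane).2.2
      rw [hja] at hle ⊢
      rw [repLen_rev, repLen_rev] at hle
      exact ⟨r, ⟨hrR, hle⟩, hrc.symm ▸ rfl⟩
    · rintro ⟨r, ⟨hrR, hrle⟩, rfl⟩
      obtain ⟨a, hra, hane, hreq⟩ := reps_eq_grp_min hrR
      rw [hra]
      constructor
      · exact mem_palSufGroups_rev.2 ⟨r, hrR.1, hrR.2.1, hra.symm⟩
      · rw [repLen_rev, repLen_rev, ← hreq]
        exact hrle
  rw [hset]
  apply Set.ncard_image_of_injOn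
  intro j1 hj1 j2 hj2 he
  exact reps_char_inj hj1.1 hj2.1 he

theorem sspAt_rev_top {w : List α} {c : α} (h : Grp w c = ∅) :
    sspAt (w.reverse ++ [c]) (w.length + 1) = ⊤ := by
  rw [sspAt_eq_top_iff]
  intro t ht hPP
  have hle := PP_le hPP
  simp at hle
  obtain ⟨k, rfl⟩ : ∃ k, t = k + 2 := ⟨t - 2, by omega⟩
  have hk : k < w.length := by omega
  have := (PP_rev hk).1 hPP
  have : k ∈ Grp w c := ⟨hk, this.1, this.2⟩
  rw [h] at this
  exact this

theorem sspAt_rev_eq {w : List α} {c : α} (h : (Grp w c).Nonempty) :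
    sspAt (w.reverse ++ [c]) (w.length + 1) = ((sInf (Grp w c) + 2 : ℕ) : ℕ∞) := by
  obtain ⟨hjn, hpj, hchar⟩ := Nat.sInf_mem h
  rw [sspAt_eq_coe_iff]
  refine ⟨by omega, (PP_rev hjn).2 ⟨hpj, hchar⟩, ?_⟩
  intro t ht hPP
  have hle := PP_le hPP
  simp at hle
  obtain ⟨k, rfl⟩ : ∃ k, t = k + 2 := ⟨t - 2, by omega⟩
  have hk : k < w.length := by omega
  have hmem := (PP_rev hk).1 hPP
  have := Nat.sInf_le (show k ∈ Grp w c from ⟨hk, hmem.1, hmem.2⟩)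
  omega

theorem piEnc_top {w : List α} {c : α} (h : Grp w c = ∅) : piEnc (c :: w) = ⊤ := by
  rw [piEnc, List.reverse_cons, sspgAt]
  rw [if_pos]
  simp only [List.length_cons]
  exact sspAt_rev_top h

theorem piEnc_eq {w : List α} {c : α} (h : (Grp w c).Nonempty) :
    piEnc (c :: w) =
      ((Set.ncard {j | j ∈ Reps w ∧ j ≤ sInf (Grp w c)} : ℕ) : ℕ∞) := by
  have hjn : sInf (Grp w c) < w.length := (Nat.sInf_mem h).1
  have hchar : w[sInf (Grp w c)]? = some c := (Nat.sInf_mem h).2.2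
  rw [piEnc, List.reverse_cons]
  simp only [List.length_cons]
  rw [sspgAt, if_neg (by rw [sspAt_rev_eq h]; exact ENat.coe_ne_top _)]
  rw [sspAt_rev_eq h]
  have htoNat : (((sInf (Grp w c) + 2 : ℕ) : ℕ∞)).toNat = sInf (Grp w c) + 2 := rfl
  rw [htoNat]
  have htk : (w.reverse ++ [c]).take (w.length + 1 - 1) = w.reverse := by
    rw [show w.length + 1 - 1 = w.reverse.length from by simp, List.take_left]
  rw [htk]
  have hidx : (w.length + 1 - 1) - (sInf (Grp w c) + 2 - 2) - 1 = w.length - sInf (Grp w c) - 1 := by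
    omega
  rw [hidx]
  have hlabel : (w.reverse)[w.length - sInf (Grp w c) - 1]? = some c := by
    rw [List.getElem?_reverse (by omega)]
    rw [show w.length - 1 - (w.length - sInf (Grp w c) - 1) = sInf (Grp w c) from by omega]
    exact hchar
  rw [hlabel, groupIdOf_rev h]

end Stmt8

namespace Stmt8
open List

variable {α : Type*}

theorem map_range_ext {f g : ℕ → ℕ∞} {N : ℕ} (h : ∀ k, k < N → f k = g k) :
    (List.range N).map f = (List.range N).map g :=
  List.map_congr_left (fun a ha => h a (List.mem_range.1 ha))

theorem map_range_ne {f g : ℕ → ℕ∞} {N k : ℕ} (hk : k < N) (hne : f k ≠ g k) :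
    (List.range N).map f ≠ (List.range N).map g := by
  intro he
  apply hne
  have h1 := congrArg (fun l => l[k]?) he
  simpa [List.getElem?_map, List.getElem?_range, hk] using h1

theorem lex_append_same {r : ℕ∞ → ℕ∞ → Prop} (p : List ℕ∞) {l₁ l₂ : List ℕ∞}
    (h : List.Lex r l₁ l₂) : List.Lex r (p ++ l₁) (p ++ l₂) := by
  induction p with
  | nil => exact h
  | cons a p ih => exact List.Lex.cons ih

theorem lex_map_range {f g : ℕ → ℕ∞} {N k : ℕ} (hk : k < N)
    (hbefore : ∀ m, m < k → f m = g m) (hat : f k < g k) :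
    List.Lex (· < ·) ((List.range N).map f) ((List.range N).map g) := by
  have hN : N = k + ((N - k - 1) + 1) := by omega
  rw [hN, List.range_add, List.map_append, List.map_append]
  rw [map_range_ext hbefore]
  apply lex_append_same
  rw [List.range_succ_eq_map]
  simp only [List.map_cons, List.map_map, Nat.add_zero]
  exact List.Lex.rel hat

theorem lex_asymm' {l₁ l₂ : List ℕ∞} (h : List.Lex (· < ·) l₁ l₂) :
    ¬ List.Lex (· < ·) l₂ l₁ := by
  induction h with
  | nil => intro h'; cases h'
  | @rel a l₁ b l₂ hab =>
    intro h'
    cases h' with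
    | rel hba => exact absurd hab (lt_asymm hba)
    | cons h'' => exact absurd hab (lt_irrefl _)
  | @cons a l₁ l₂ hl ih =>
    intro h'
    cases h' with
    | rel hba => exact absurd hba (lt_irrefl _)
    | cons h'' => exact ih h''

end Stmt8

namespace Stmt8
open List

variable {α : Type*}

theorem PP_self {w : List α} {j : ℕ} (hj : j ≤ w.length) :
    PP w j j ↔ IsPal (w.take j) := by
  constructor
  · rintro ⟨u, hu, hp, hl⟩
    have : u = w.take j := suffix_eq_of_length hu List.suffix_rfl (by simp; omega)
    rwa [this] at hp
  · intro hp
    exact ⟨w.take j, List.suffix_rfl, hp, by simp; omega⟩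

theorem entry_eq_top {w : List α} {c : α} {i : ℕ} (hi : 2 ≤ i) (hile : i ≤ w.length + 1)
    (htop : sspAt w (i - 1) = ⊤)
    (hnot : ¬((Grp w c).Nonempty ∧ i = sInf (Grp w c) + 2)) :
    sspAt (c :: w) i = ⊤ := by
  apply sspAt_cons_of_not_pal hi hile htop
  intro hp
  have hj : i - 2 < w.length := by omega
  rw [show i - 1 = (i - 2) + 1 from by omega] at hp htop
  rw [pal_cons_take hj] at hp
  obtain ⟨hpal, hchar⟩ := hp
  have hmem : (i - 2) ∈ Grp w c := ⟨hj, hpal, by rw [List.getElem?_eq_getElem hj, hchar]⟩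
  have hne : (Grp w c).Nonempty := ⟨_, hmem⟩
  have hinf := Nat.sInf_le hmem
  rcases eq_or_lt_of_le hinf with heq | hlt
  · exact hnot ⟨hne, by omega⟩
  · obtain ⟨h1, h2, h3⟩ := Nat.sInf_mem hne
    exact rep_lt_contra hlt hj h2 hpal
      (by rw [h3, List.getElem?_eq_getElem hj, hchar]) htop

theorem entry_hit {w : List α} {c : α} (hne : (Grp w c).Nonempty) :
    sspAt (c :: w) (sInf (Grp w c) + 2) = ((sInf (Grp w c) + 2 : ℕ) : ℕ∞) ∧
      sspAt w (sInf (Grp w c) + 1) = ⊤ := by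
  obtain ⟨hjn, hpal, hchar⟩ := Nat.sInf_mem hne
  have htop := sInf_grp_mem_reps hne
  refine ⟨?_, htop⟩
  set j := sInf (Grp w c) with hj
  have hcp : IsPal (c :: w.take (j + 2 - 1)) := by
    rw [show j + 2 - 1 = j + 1 from by omega, pal_cons_take hjn]
    refine ⟨hpal, ?_⟩
    rw [List.getElem?_eq_getElem hjn] at hchar
    exact Option.some_injective _ hchar
  have := sspAt_cons_of_pal (w := w) (c := c) (i := j + 2) (by omega) (by omega)
    (by rw [show j + 2 - 1 = j + 1 from by omega]; exact htop) hcp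
  exact_mod_cast this

end Stmt8

namespace Stmt8
open List

variable {α : Type*}

theorem entries_agree {x' y' : List α} {c c' : α}
    (hlen : x'.length = y'.length)
    (hssp : ∀ i, 1 ≤ i → i ≤ x'.length → sspAt x' i = sspAt y' i)
    {k : ℕ} (h1 : 1 ≤ k) (hk : k ≤ x'.length)
    (hnotx : ¬((Grp x' c).Nonempty ∧ k + 1 = sInf (Grp x' c) + 2))
    (hnoty : ¬((Grp y' c').Nonempty ∧ k + 1 = sInf (Grp y' c') + 2)) :
    sspAt (c :: x') (k + 1) = sspAt (c' :: y') (k + 1) := by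
  have he := hssp k h1 hk
  by_cases htop : sspAt x' k = ⊤
  · have htop' : sspAt y' k = ⊤ := by rw [← he]; exact htop
    rw [entry_eq_top (by omega) (by omega) (by simpa using htop) hnotx,
      entry_eq_top (by omega) (by omega) (by simpa using htop') hnoty]
  · have htop' : sspAt y' k ≠ ⊤ := by rw [← he]; exact htop
    rw [sspAt_cons_of_ne_top (by omega) (by omega) (by simpa using htop),
      sspAt_cons_of_ne_top (by omega) (by omega) (by simpa using htop')]
    simpa using he

theorem lex_case {x' y' : List α} {c c' : α}
    (hlen : x'.length = y'.length)
    (hssp : ∀ i, 1 ≤ i → i ≤ x'.length → sspAt x' i = sspAt y' i)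
    (hx : (Grp x' c).Nonempty)
    (hy : ∀ _ : (Grp y' c').Nonempty, sInf (Grp x' c) < sInf (Grp y' c')) :
    List.Lex (· < ·) (ssp (c :: x')) (ssp (c' :: y')) ∧ ssp (c :: x') ≠ ssp (c' :: y') := by
  set n := x'.length with hn
  set jx := sInf (Grp x' c) with hjx
  have hjxn : jx < n := (Nat.sInf_mem hx).1
  have hhit := entry_hit hx
  have hytop : sspAt y' (jx + 1) = ⊤ := by
    rw [← hssp (jx + 1) (by omega) (by omega)]
    exact hhit.2
  have hG : sspAt (c' :: y') (jx + 2) = ⊤ := by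
    apply entry_eq_top (by omega) (by omega) (by simpa using hytop)
    rintro ⟨hy', heq⟩
    have := hy hy'
    omega
  have hbefore : ∀ m, m < jx + 1 →
      sspAt (c :: x') (m + 1) = sspAt (c' :: y') (m + 1) := by
    intro m hm
    match m with
    | 0 => rw [sspAt_cons_one, sspAt_cons_one]
    | (m + 1) =>
      apply entries_agree hlen hssp (by omega) (by omega)
      · rintro ⟨hne, heq⟩; omega
      · rintro ⟨hne, heq⟩; have := hy hne; omega
  have hx1 : ssp (c :: x') = (List.range (n + 1)).map (fun k => sspAt (c :: x') (k + 1)) := by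
    rw [ssp, List.length_cons]
  have hy1 : ssp (c' :: y') = (List.range (n + 1)).map (fun k => sspAt (c' :: y') (k + 1)) := by
    rw [ssp, List.length_cons, hlen]
  have hat : sspAt (c :: x') (jx + 1 + 1) < sspAt (c' :: y') (jx + 1 + 1) := by
    rw [show jx + 1 + 1 = jx + 2 from rfl, hhit.1, hG]
    exact WithTop.coe_lt_top _
  constructor
  · rw [hx1, hy1]
    exact lex_map_range (by omega) hbefore hat
  · rw [hx1, hy1]
    exact map_range_ne (k := jx + 1) (by omega) (ne_of_lt hat)

theorem pi_lt_case {x' y' : List α} {c c' : α}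
    (hReps : Reps x' = Reps y')
    (hx : (Grp x' c).Nonempty)
    (hy : ∀ _ : (Grp y' c').Nonempty, sInf (Grp x' c) < sInf (Grp y' c')) :
    piEnc (c :: x') < piEnc (c' :: y') := by
  rw [piEnc_eq hx]
  by_cases hy' : (Grp y' c').Nonempty
  · rw [piEnc_eq hy']
    have hlt := hy hy'
    have hsub : {j | j ∈ Reps x' ∧ j ≤ sInf (Grp x' c)} ⊂
        {j | j ∈ Reps y' ∧ j ≤ sInf (Grp y' c')} := by
      constructor
      · rintro j ⟨hj, hle⟩
        exact ⟨hReps ▸ hj, by omega⟩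
      · intro hsup
        have hjy : sInf (Grp y' c') ∈ {j | j ∈ Reps y' ∧ j ≤ sInf (Grp y' c')} :=
          ⟨grp_min_mem_reps hy', le_refl _⟩
        have := hsup hjy
        have h2 := this.2
        omega
    have hfin : {j | j ∈ Reps y' ∧ j ≤ sInf (Grp y' c')}.Finite :=
      Set.Finite.subset (Set.finite_Iic (sInf (Grp y' c'))) (fun j hj => hj.2)
    have := Set.ncard_lt_ncard hsub hfin
    exact_mod_cast this
  · rw [piEnc_top (Set.not_nonempty_iff_eq_empty.1 hy')]
    exact WithTop.coe_lt_top _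

end Stmt8

open Stmt8 List

/-- For `x = c·x'` and `y = c'·y'` with `ssp x' = ssp y'`:
(a) `ssp x = ssp y` iff `π(x) = π(y)`; (b) `ssp x ≺ ssp y` iff `π(x) < π(y)`. -/
theorem stmt8 {α : Type*} (c c' : α) (x' y' : List α) (h : ssp x' = ssp y') :
    (ssp (c :: x') = ssp (c' :: y') ↔ piEnc (c :: x') = piEnc (c' :: y')) ∧
    (List.Lex (· < ·) (ssp (c :: x')) (ssp (c' :: y')) ↔
      piEnc (c :: x') < piEnc (c' :: y')) := by
  classical
  have hlen : x'.length = y'.length := by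
    have hL := congrArg List.length h
    simpa [ssp] using hL
  have key : ∀ (w : List α) (i : ℕ), 1 ≤ i → i ≤ w.length →
      (ssp w)[i - 1]? = some (sspAt w i) := by
    intro w i h1 h2
    have h3 : (ssp w)[i - 1]? = some (sspAt w ((i - 1) + 1)) := by
      simp [ssp, List.getElem?_range, show i - 1 < w.length from by omega]
    rw [h3, show i - 1 + 1 = i from by omega]
  have hssp : ∀ i, 1 ≤ i → i ≤ x'.length → sspAt x' i = sspAt y' i := by
    intro i h1 h2
    have h1x := key x' i h1 h2
    have h1y := key y' i h1 (by omega)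
    rw [h] at h1x
    exact Option.some_injective _ (h1x.symm.trans h1y)
  have hsspY : ∀ i, 1 ≤ i → i ≤ y'.length → sspAt y' i = sspAt x' i :=
    fun i h1 h2 => (hssp i h1 (by omega)).symm
  have hPPeq : ∀ m t, m ≤ x'.length → (PP x' m t ↔ PP y' m t) := PSeq hlen hssp
  have hReps : Reps x' = Reps y' := by
    ext j
    simp only [Reps, Set.mem_setOf_eq]
    constructor
    · rintro ⟨h1, h2, h3⟩
      refine ⟨by omega, ?_, by rw [← hssp (j + 1) (by omega) (by omega)]; exact h3⟩
      rw [← PP_self (show j ≤ y'.length by omega), ← hPPeq j j (by omega),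
        PP_self (show j ≤ x'.length by omega)]
      exact h2
    · rintro ⟨h1, h2, h3⟩
      refine ⟨by omega, ?_, by rw [hssp (j + 1) (by omega) (by omega)]; exact h3⟩
      rw [← PP_self (show j ≤ x'.length by omega), hPPeq j j (by omega),
        PP_self (show j ≤ y'.length by omega)]
      exact h2
  have hx1 : ssp (c :: x') = (List.range (x'.length + 1)).map
      (fun k => sspAt (c :: x') (k + 1)) := by rw [ssp, List.length_cons]
  have hy1 : ssp (c' :: y') = (List.range (x'.length + 1)).map
      (fun k => sspAt (c' :: y') (k + 1)) := by rw [ssp, List.length_cons, hlen]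
  by_cases hx : (Grp x' c).Nonempty <;> by_cases hy : (Grp y' c').Nonempty
  · rcases Nat.lt_trichotomy (sInf (Grp x' c)) (sInf (Grp y' c')) with hlt | heq | hgt
    · obtain ⟨hLex, hne⟩ := lex_case hlen hssp hx (fun _ => hlt)
      have hπ := pi_lt_case hReps hx (fun _ => hlt)
      exact ⟨iff_of_false hne (ne_of_lt hπ), iff_of_true hLex hπ⟩
    · have hsspEq : ssp (c :: x') = ssp (c' :: y') := by
        rw [hx1, hy1]
        apply map_range_ext
        intro k hk
        match k with
        | 0 => rw [sspAt_cons_one, sspAt_cons_one]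
        | (k + 1) =>
          by_cases hhit : k + 1 + 1 = sInf (Grp x' c) + 2
          · calc sspAt (c :: x') (k + 1 + 1)
                = ((sInf (Grp x' c) + 2 : ℕ) : ℕ∞) := by
                  rw [hhit]; exact (entry_hit hx).1
              _ = ((sInf (Grp y' c') + 2 : ℕ) : ℕ∞) := by rw [heq]
              _ = sspAt (c' :: y') (k + 1 + 1) := by
                  rw [show k + 1 + 1 = sInf (Grp y' c') + 2 from by omega]
                  exact ((entry_hit hy).1).symm
          · apply entries_agree hlen hssp (by omega) (by omega)
            · rintro ⟨-, h2⟩; exact hhit (by omega)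
            · rintro ⟨-, h2⟩; exact hhit (by omega)
      have hπEq : piEnc (c :: x') = piEnc (c' :: y') := by
        rw [piEnc_eq hx, piEnc_eq hy]
        have hseteq : {j | j ∈ Reps x' ∧ j ≤ sInf (Grp x' c)} =
            {j | j ∈ Reps y' ∧ j ≤ sInf (Grp y' c')} := by rw [hReps, heq]
        rw [hseteq]
      exact ⟨iff_of_true hsspEq hπEq,
        iff_of_false (fun hL => by rw [hsspEq] at hL; exact lex_asymm' hL hL)
          (by rw [hπEq]; exact lt_irrefl _)⟩
    · obtain ⟨hLex, hne⟩ := lex_case hlen.symm hsspY hy (fun _ => hgt)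
      have hπ := pi_lt_case hReps.symm hy (fun _ => hgt)
      exact ⟨iff_of_false (fun he => hne he.symm) (fun he => (ne_of_lt hπ) he.symm),
        iff_of_false (lex_asymm' hLex) (fun hlt' => lt_asymm hπ hlt')⟩
  · obtain ⟨hLex, hne⟩ := lex_case hlen hssp hx (fun hy' => absurd hy' hy)
    have hπ := pi_lt_case hReps hx (fun hy' => absurd hy' hy)
    exact ⟨iff_of_false hne (ne_of_lt hπ), iff_of_true hLex hπ⟩
  · obtain ⟨hLex, hne⟩ := lex_case hlen.symm hsspY hy (fun hx' => absurd hx' hx)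
    have hπ := pi_lt_case hReps.symm hy (fun hx' => absurd hx' hx)
    exact ⟨iff_of_false (fun he => hne he.symm) (fun he => (ne_of_lt hπ) he.symm),
      iff_of_false (lex_asymm' hLex) (fun hlt' => lt_asymm hπ hlt')⟩
  · have hsspEq : ssp (c :: x') = ssp (c' :: y') := by
      rw [hx1, hy1]
      apply map_range_ext
      intro k hk
      match k with
      | 0 => rw [sspAt_cons_one, sspAt_cons_one]
      | (k + 1) =>
        apply entries_agree hlen hssp (by omega) (by omega)
        · rintro ⟨hne', -⟩; exact hx hne'
        · rintro ⟨hne', -⟩; exact hy hne'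
    have hπEq : piEnc (c :: x') = piEnc (c' :: y') := by
      rw [piEnc_top (Set.not_nonempty_iff_eq_empty.1 hx),
        piEnc_top (Set.not_nonempty_iff_eq_empty.1 hy)]
    exact ⟨iff_of_true hsspEq hπEq,
      iff_of_false (fun hL => by rw [hsspEq] at hL; exact lex_asymm' hL hL)
        (by rw [hπEq]; exact lt_irrefl _)⟩
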